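/- A line can intersect the interiors of at most two of the five 'corner triangles' of a convex pentagon, where the corner triangle at vertex v_i is the convex hull of v_i and the midpoints of its two adjacent edges. -/

import Mathlib

noncomputable section ProofAux

/-- 2D cross product of two vectors. -/
def crAux (a b : Fin 2 → ℝ) : ℝ := a 0 * b 1 - a 1 * b 0

lemma crAux_smul_identity (u v w : Fin 2 → ℝ) :
    crAux v w • u = crAux u w • v + crAux v u • w := by
  funext i
  fin_cases i <;>
    · simp only [crAux, Pi.smul_apply, Pi.add_apply, smul_eq_mul, Fin.mk_zero, Fin.mk_one,
        Fin.isValue]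
      ring

lemma lin_crAux (h : (Fin 2 → ℝ) →L[ℝ] ℝ) (u v w : Fin 2 → ℝ) :
    crAux v w * h u = crAux u w * h v + crAux v u * h w := by
  have h2 := congrArg h (crAux_smul_identity u v w)
  simpa [map_add, map_smul, smul_eq_mul] using h2

lemma collinear_of_crAux {a b c : Fin 2 → ℝ} (h : crAux (b - a) (c - a) = 0) :
    Collinear ℝ ({a, b, c} : Set (Fin 2 → ℝ)) := by
  rw [collinear_iff_of_mem (Set.mem_insert a _)]
  simp only [crAux, Pi.sub_apply] at h
  by_cases hu : b - a = 0
  · have hba : b = a := by rwa [sub_eq_zero] at hu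
    refine ⟨c - a, fun p hp => ?_⟩
    simp only [Set.mem_insert_iff, Set.mem_singleton_iff] at hp
    rcases hp with h' | h' | h'
    · exact ⟨0, by rw [h']; simp⟩
    · exact ⟨0, by rw [h', hba]; simp⟩
    · exact ⟨1, by rw [h']; simp⟩
  · refine ⟨b - a, fun p hp => ?_⟩
    simp only [Set.mem_insert_iff, Set.mem_singleton_iff] at hp
    rcases hp with h' | h' | h'
    · exact ⟨0, by rw [h']; simp⟩
    · exact ⟨1, by rw [h']; simp⟩
    · subst h'
      by_cases h0 : b 0 - a 0 = 0
      · have h1 : b 1 - a 1 ≠ 0 := by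
          intro h1
          apply hu
          funext i
          fin_cases i <;> simp only [Pi.sub_apply, Pi.zero_apply, Fin.mk_zero, Fin.mk_one,
            Fin.isValue]
          · linarith
          · linarith
        refine ⟨(p 1 - a 1) / (b 1 - a 1), ?_⟩
        have hm : (b 1 - a 1) * (p 0 - a 0) = 0 := by
          linear_combination (p 1 - a 1) * h0 - h
        have hc0 : p 0 - a 0 = 0 := (mul_eq_zero.mp hm).resolve_left h1
        funext i
        fin_cases i <;> simp only [Pi.vadd_apply, vadd_eq_add, Pi.add_apply, Pi.smul_apply,
          Pi.sub_apply, smul_eq_mul, Fin.mk_zero, Fin.mk_one, Fin.isValue]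
        · rw [h0]
          linarith
        · field_simp
          ring
      · refine ⟨(p 0 - a 0) / (b 0 - a 0), ?_⟩
        funext i
        fin_cases i <;> simp only [Pi.vadd_apply, vadd_eq_add, Pi.add_apply, Pi.smul_apply,
          Pi.sub_apply, smul_eq_mul, Fin.mk_zero, Fin.mk_one, Fin.isValue]
        · field_simp
          ring
        · field_simp
          nlinarith [h]

lemma lemG_aux {D A E fv fw fu gv gw gu pv pw pu : ℝ} (hD : D ≠ 0)
    (hf : D * fu = A * fv + E * fw) (hg : D * gu = A * gv + E * gw)
    (hp : D * pu = A * pv + E * pw)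
    (hfv : fv = 0) (hfw : fw < 0) (hfu : fu < 0)
    (hgw : gw = 0) (hgv : 0 < gv)
    (hpu : pu = 0) (hpv : pv < 0) (hpw : pw < 0) : gu ≤ 0 := by
  subst hfv hgw hpu
  by_contra hgu
  push_neg at hgu
  have hD2 : 0 < D ^ 2 := by positivity
  have hADgv : A * D * gv = D ^ 2 * gu := by linear_combination (-D) * hg
  have hAD : 0 < A * D := by
    have h2 : 0 < D ^ 2 * gu := mul_pos hD2 hgu
    by_contra hA; push_neg at hA
    nlinarith [mul_nonneg (neg_nonneg.mpr hA) hgv.le]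
  have hEDfw : E * D * fw = D ^ 2 * fu := by linear_combination (-D) * hf
  have hED : 0 < E * D := by
    have h2 : D ^ 2 * fu < 0 := mul_neg_of_pos_of_neg hD2 hfu
    by_contra hE; push_neg at hE
    nlinarith [mul_nonneg (neg_nonneg.mpr hE) (neg_nonneg.mpr hfw.le)]
  have hpD : A * D * pv + E * D * pw = 0 := by linear_combination (-D) * hp
  nlinarith [hpD, mul_neg_of_pos_of_neg hAD hpv, mul_neg_of_pos_of_neg hED hpw]

lemma lemE_aux {g : (Fin 2 → ℝ) →L[ℝ] ℝ} {γ : ℝ} {S : Set (Fin 2 → ℝ)}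
    (hS : ∀ y ∈ S, γ ≤ g y) {y₀ : Fin 2 → ℝ} (hy : 0 < g y₀)
    {x : Fin 2 → ℝ} (hx : x ∈ interior S) : γ < g x := by
  have hge : γ ≤ g x := hS x (interior_subset hx)
  rcases hge.lt_or_eq with h | h
  · exact h
  exfalso
  have hc : Continuous fun t : ℝ => x - t • y₀ := by continuity
  have hU : IsOpen ((fun t : ℝ => x - t • y₀) ⁻¹' interior S) :=
    isOpen_interior.preimage hc
  have h0 : (0 : ℝ) ∈ (fun t : ℝ => x - t • y₀) ⁻¹' interior S := by
    simpa using hx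
  obtain ⟨ε, hε, hball⟩ := Metric.isOpen_iff.mp hU 0 h0
  have hmem : (ε / 2 : ℝ) ∈ Metric.ball (0 : ℝ) ε := by
    simp only [Metric.mem_ball, Real.dist_eq, sub_zero]
    rw [abs_of_pos (by linarith)]
    linarith
  have hxin : x - (ε / 2) • y₀ ∈ S := interior_subset (hball hmem)
  have h2 := hS _ hxin
  rw [map_sub, map_smul, smul_eq_mul, ← h] at h2
  nlinarith

lemma seg_param_aux {p d : Fin 2 → ℝ} {t1 t2 t3 : ℝ} (h1 : t1 ≤ t2) (h2 : t2 ≤ t3) :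
    p + t2 • d ∈ segment ℝ (p + t1 • d) (p + t3 • d) := by
  rcases eq_or_lt_of_le (h1.trans h2) with h | h
  · have ht : t2 = t1 := le_antisymm (h ▸ h2) h1
    rw [ht]
    exact left_mem_segment ℝ _ _
  · rw [segment_eq_image']
    refine ⟨(t2 - t1) / (t3 - t1), ⟨div_nonneg (by linarith) (by linarith), ?_⟩, ?_⟩
    · rw [div_le_one (by linarith)]
      linarith
    · show p + t1 • d + ((t2 - t1) / (t3 - t1)) • (p + t3 • d - (p + t1 • d)) = p + t2 • d
      have hsub : p + t3 • d - (p + t1 • d) = (t3 - t1) • d := by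
        rw [sub_smul]; abel
      rw [hsub, smul_smul, div_mul_cancel₀ _ (by linarith : t3 - t1 ≠ 0), sub_smul]
      abel

end ProofAux
lemma clm_midpoint_aux (f : (Fin 2 → ℝ) →L[ℝ] ℝ) (x y : Fin 2 → ℝ) :
    f (midpoint ℝ x y) + f (midpoint ℝ x y) = f x + f y := by
  rw [← map_add, midpoint_add_self, map_add]

/-- A line intersects the interiors of at most two of the five corner triangles
`T i = conv {(v (i−1) + v i)/2, v i, (v (i+1) + v i)/2}` of a convex pentagon
with vertices `v 0, …, v 4` (in cyclic order, indices mod 5). -/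
theorem stmt_10 (v : Fin 5 → (Fin 2 → ℝ))
    (hconvpos : ∀ i : Fin 5, v i ∉ convexHull ℝ (v '' {j | j ≠ i}))
    (hcyc : ∀ i : Fin 5,
      segment ℝ (v i) (v (i + 1)) ⊆ frontier (convexHull ℝ (Set.range v)))
    (T : Fin 5 → Set (Fin 2 → ℝ))
    (hT : ∀ i, T i = convexHull ℝ
      {midpoint ℝ (v (i - 1)) (v i), v i, midpoint ℝ (v (i + 1)) (v i)})
    (p d : Fin 2 → ℝ) (hd : d ≠ 0)
    (L : Set (Fin 2 → ℝ)) (hL : L = {x | ∃ t : ℝ, x = p + t • d}) :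
    {i : Fin 5 | (L ∩ interior (T i)).Nonempty}.ncard ≤ 2 := by
  classical
  set P : Set (Fin 2 → ℝ) := convexHull ℝ (Set.range v) with hPdef
  -- vertices are pairwise distinct and no three are collinear
  have hnc : ∀ i j k : Fin 5, i ≠ j → j ≠ k → i ≠ k →
      ¬ Collinear ℝ ({v i, v j, v k} : Set (Fin 2 → ℝ)) := by
    intro i j k hij hjk hik hcol
    have hmem : ∀ a b : Fin 5, a ≠ b → v a ∈ convexHull ℝ (v '' {l | l ≠ b}) :=
      fun a b hab => subset_convexHull ℝ _ ⟨a, hab, rfl⟩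
    rcases hcol.wbtw_or_wbtw_or_wbtw with hw | hw | hw
    · exact hconvpos j ((convex_convexHull ℝ _).segment_subset
        (hmem i j hij) (hmem k j (Ne.symm hjk)) (mem_segment_iff_wbtw.mpr hw))
    · exact hconvpos k ((convex_convexHull ℝ _).segment_subset
        (hmem j k hjk) (hmem i k hik) (mem_segment_iff_wbtw.mpr hw))
    · exact hconvpos i ((convex_convexHull ℝ _).segment_subset
        (hmem k i (Ne.symm hik)) (hmem j i (Ne.symm hij)) (mem_segment_iff_wbtw.mpr hw))
  have hcr : ∀ i j k : Fin 5, i ≠ j → j ≠ k → i ≠ k →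
      crAux (v j - v i) (v k - v i) ≠ 0 := fun i j k hij hjk hik h =>
    hnc i j k hij hjk hik (collinear_of_crAux h)
  -- the pentagon has nonempty interior
  have hPconv : Convex ℝ P := convex_convexHull ℝ _
  have hspan : affineSpan ℝ P = ⊤ := by
    rw [hPdef, affineSpan_convexHull]
    have hai : AffineIndependent ℝ ![v 0, v 1, v 2] := by
      rw [affineIndependent_iff_not_collinear_set]
      exact hnc 0 1 2 (by decide) (by decide) (by decide)
    have htop : affineSpan ℝ (Set.range ![v 0, v 1, v 2]) = ⊤ := by
      rw [hai.affineSpan_eq_top_iff_card_eq_finrank_add_one]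
      simp
    apply eq_top_iff.mpr
    rw [← htop]
    apply affineSpan_mono
    rintro x ⟨i, rfl⟩
    fin_cases i
    · exact ⟨0, by simp⟩
    · exact ⟨1, by simp⟩
    · exact ⟨2, by simp⟩
  have hint : (interior P).Nonempty :=
    hPconv.interior_nonempty_iff_affineSpan_eq_top.mpr hspan
  obtain ⟨y, hy⟩ := hint
  -- supporting functionals along each edge
  have hedge : ∀ i : Fin 5, ∃ f : (Fin 2 → ℝ) →L[ℝ] ℝ,
      f (v (i+1)) = f (v i) ∧ ∀ j : Fin 5, j ≠ i → j ≠ i + 1 → f (v j) < f (v i) := by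
    intro i
    have hmf : midpoint ℝ (v i) (v (i+1)) ∈ frontier P := hcyc i (midpoint_mem_segment _ _)
    have hmi : midpoint ℝ (v i) (v (i+1)) ∉ interior P := fun hmem => hmf.2 hmem
    obtain ⟨f, hf⟩ := geometric_hahn_banach_open_point hPconv.interior isOpen_interior hmi
    set m := midpoint ℝ (v i) (v (i+1)) with hm
    have hfy : f y < f m := hf y hy
    have hfP : ∀ x ∈ P, f x ≤ f m := by
      intro x hx
      by_contra hgt
      push_neg at hgt
      have hwpos : 0 < f x - f y := by linarith
      have hδpos : 0 < f x - f m := by linarith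
      set w : ℝ := f x - f y with hwd
      set δ : ℝ := f x - f m with hδd
      set τ : ℝ := min 1 (δ / (2 * w)) with hτd
      have hτ0 : 0 < τ := lt_min one_pos (by positivity)
      have hτ1 : τ ≤ 1 := min_le_left _ _
      have hz : x + τ • (y - x) ∈ interior P :=
        hPconv.add_smul_sub_mem_interior hx hy ⟨hτ0, hτ1⟩
      have hlt := hf _ hz
      rw [map_add, map_smul, map_sub, smul_eq_mul] at hlt
      have htw : δ < τ * w := by
        rw [hδd, hwd]; nlinarith [hlt]
      rcases le_total (δ / (2*w)) 1 with hmin | hmin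
      · rw [hτd, min_eq_right hmin] at htw
        have he : δ/(2*w) * w = δ/2 := by field_simp
        rw [he] at htw
        linarith
      · rw [hτd, min_eq_left hmin] at htw
        rw [le_div_iff₀ (by positivity)] at hmin
        linarith
    have h1 : f (v i) ≤ f m := hfP _ (subset_convexHull ℝ _ ⟨i, rfl⟩)
    have h2 : f (v (i+1)) ≤ f m := hfP _ (subset_convexHull ℝ _ ⟨i+1, rfl⟩)
    have hmid : f m + f m = f (v i) + f (v (i+1)) := by
      rw [hm]; exact clm_midpoint_aux f _ _
    have hei : f (v i) = f m := by linarith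
    have hei1 : f (v (i+1)) = f m := by linarith
    refine ⟨f, by rw [hei, hei1], ?_⟩
    intro j hj hj1
    have hle : f (v j) ≤ f m := hfP _ (subset_convexHull ℝ _ ⟨j, rfl⟩)
    rw [hei]
    rcases hle.lt_or_eq with hlt | heq
    · exact hlt
    exfalso
    have hzne : f (y - m) ≠ 0 := by
      rw [map_sub]
      intro h0
      linarith
    have hfvv : f (v (i+1) - v i) = 0 := by rw [map_sub, hei1, hei]; ring
    have hfww : f (v j - v i) = 0 := by rw [map_sub, heq, hei]; ring
    have hcr0 : crAux (v (i+1) - v i) (v j - v i) = 0 := by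
      have hid := lin_crAux f (y - m) (v (i+1) - v i) (v j - v i)
      rw [hfvv, hfww] at hid
      have h4 : crAux (v (i+1) - v i) (v j - v i) * f (y - m) = 0 := by rw [hid]; ring
      exact (mul_eq_zero.mp h4).resolve_right hzne
    exact hcr i (i+1) j ((by decide : ∀ x : Fin 5, x ≠ x + 1) i)
      (Ne.symm hj1) (Ne.symm hj) hcr0
  -- main separation: a functional separating int (T b) from all other T j
  have hsep : ∀ b : Fin 5, ∃ g : (Fin 2 → ℝ) →L[ℝ] ℝ, ∃ γ : ℝ,
      (∀ j, j ≠ b → T j ⊆ {x | g x ≤ γ}) ∧ (∀ x ∈ interior (T b), γ < g x) := by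
    intro b
    set e : Fin 2 → ℝ := v (b+1) - v (b-1) with he
    set g0 : (Fin 2 → ℝ) →L[ℝ] ℝ := LinearMap.toContinuousLinearMap
      { toFun := fun x => crAux e x
        map_add' := by intro x y; simp only [crAux, Pi.add_apply]; ring
        map_smul' := by
          intro r x
          simp only [crAux, Pi.smul_apply, smul_eq_mul, RingHom.id_apply]
          ring } with hg0
    have hg0x : ∀ x, g0 x = crAux e x := fun x => by
      rw [hg0, LinearMap.coe_toContinuousLinearMap']; rfl
    set K : ℝ := crAux e (v b - v (b+1)) with hK
    have hKne : K ≠ 0 := by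
      intro h0
      apply hcr (b-1) (b+1) b ((by decide : ∀ x : Fin 5, x - 1 ≠ x + 1) b)
        ((by decide : ∀ x : Fin 5, x + 1 ≠ x) b) ((by decide : ∀ x : Fin 5, x - 1 ≠ x) b)
      have heq : crAux (v (b+1) - v (b-1)) (v b - v (b-1)) = K := by
        rw [hK, he]; simp only [crAux, Pi.sub_apply]; ring
      rw [heq]; exact h0
    set σ : ℝ := if 0 < K then 1 else -1 with hσ
    have hσK : 0 < σ * K := by
      rcases lt_trichotomy K 0 with hh | hh | hh
      · rw [hσ, if_neg (by linarith)]; nlinarith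
      · exact absurd hh hKne
      · rw [hσ, if_pos hh]; linarith
    set g : (Fin 2 → ℝ) →L[ℝ] ℝ := σ • g0 with hg
    have hgx : ∀ x, g x = σ * crAux e x := fun x => by
      rw [hg]; simp [hg0x]
    set s : ℝ := g (v (b+1)) with hs
    set t : ℝ := g (v b) with ht
    have hsb : g (v (b-1)) = s := by
      rw [hs, hgx, hgx, he]; simp only [crAux, Pi.sub_apply]; ring
    have hts : t - s = σ * K := by
      rw [ht, hs, hgx, hgx, hK, he]; simp only [crAux, Pi.sub_apply]; ring
    have hslt : s < t := by linarith
    -- the two far vertices are on the far side of the midline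
    have hst2 : g (v (b+2)) ≤ s := by
      obtain ⟨f, hfe, hfs⟩ := hedge b
      obtain ⟨f', hfe', hfs'⟩ := hedge (b+1)
      have h11 : b + 1 + 1 = b + 2 := (by decide : ∀ x : Fin 5, x + 1 + 1 = x + 2) b
      have hD : crAux (v b - v (b+1)) (v (b-1) - v (b+1)) ≠ 0 :=
        hcr (b+1) b (b-1) ((by decide : ∀ x : Fin 5, x + 1 ≠ x) b)
          ((by decide : ∀ x : Fin 5, x ≠ x - 1) b)
          ((by decide : ∀ x : Fin 5, x + 1 ≠ x - 1) b)
      have hfid := lin_crAux f (v (b+2) - v (b+1)) (v b - v (b+1)) (v (b-1) - v (b+1))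
      have hgid := lin_crAux g (v (b+2) - v (b+1)) (v b - v (b+1)) (v (b-1) - v (b+1))
      have hpid := lin_crAux f' (v (b+2) - v (b+1)) (v b - v (b+1)) (v (b-1) - v (b+1))
      have hfvv : f (v b - v (b+1)) = 0 := by rw [map_sub, hfe]; ring
      have hfww : f (v (b-1) - v (b+1)) < 0 := by
        rw [map_sub, hfe]
        have := hfs (b-1) ((by decide : ∀ x : Fin 5, x - 1 ≠ x) b)
          ((by decide : ∀ x : Fin 5, x - 1 ≠ x + 1) b)
        linarith
      have hfuu : f (v (b+2) - v (b+1)) < 0 := by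
        rw [map_sub, hfe]
        have := hfs (b+2) ((by decide : ∀ x : Fin 5, x + 2 ≠ x) b)
          ((by decide : ∀ x : Fin 5, x + 2 ≠ x + 1) b)
        linarith
      have hgvv : 0 < g (v b - v (b+1)) := by rw [map_sub, ← ht, ← hs]; linarith
      have hgww : g (v (b-1) - v (b+1)) = 0 := by rw [map_sub, hsb, ← hs]; ring
      have hpuu : f' (v (b+2) - v (b+1)) = 0 := by
        rw [map_sub, ← h11, hfe']
        ring
      have hpvv : f' (v b - v (b+1)) < 0 := by
        rw [map_sub]
        have := hfs' b ((by decide : ∀ x : Fin 5, x ≠ x + 1) b)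
          ((by decide : ∀ x : Fin 5, x ≠ x + 1 + 1) b)
        linarith
      have hpww : f' (v (b-1) - v (b+1)) < 0 := by
        rw [map_sub]
        have := hfs' (b-1) ((by decide : ∀ x : Fin 5, x - 1 ≠ x + 1) b)
          ((by decide : ∀ x : Fin 5, x - 1 ≠ x + 1 + 1) b)
        linarith
      have hgu := lemG_aux hD hfid hgid hpid hfvv hfww hfuu hgww hgvv hpuu hpvv hpww
      rw [map_sub, ← hs] at hgu
      linarith
    have hst3 : g (v (b+3)) ≤ s := by
      obtain ⟨f, hfe, hfs⟩ := hedge (b-1)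
      obtain ⟨f', hfe', hfs'⟩ := hedge (b+3)
      have h11 : b - 1 + 1 = b := (by decide : ∀ x : Fin 5, x - 1 + 1 = x) b
      have h34 : b + 3 + 1 = b - 1 := (by decide : ∀ x : Fin 5, x + 3 + 1 = x - 1) b
      have hD : crAux (v b - v (b-1)) (v (b+1) - v (b-1)) ≠ 0 :=
        hcr (b-1) b (b+1) ((by decide : ∀ x : Fin 5, x - 1 ≠ x) b)
          ((by decide : ∀ x : Fin 5, x ≠ x + 1) b)
          ((by decide : ∀ x : Fin 5, x - 1 ≠ x + 1) b)
      have hfid := lin_crAux f (v (b+3) - v (b-1)) (v b - v (b-1)) (v (b+1) - v (b-1))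
      have hgid := lin_crAux g (v (b+3) - v (b-1)) (v b - v (b-1)) (v (b+1) - v (b-1))
      have hpid := lin_crAux f' (v (b+3) - v (b-1)) (v b - v (b-1)) (v (b+1) - v (b-1))
      have hfvv : f (v b - v (b-1)) = 0 := by
        rw [map_sub, ← hfe, h11]
        ring
      have hfww : f (v (b+1) - v (b-1)) < 0 := by
        rw [map_sub]
        have := hfs (b+1) ((by decide : ∀ x : Fin 5, x + 1 ≠ x - 1) b)
          ((by decide : ∀ x : Fin 5, x + 1 ≠ x - 1 + 1) b)
        linarith
      have hfuu : f (v (b+3) - v (b-1)) < 0 := by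
        rw [map_sub]
        have := hfs (b+3) ((by decide : ∀ x : Fin 5, x + 3 ≠ x - 1) b)
          ((by decide : ∀ x : Fin 5, x + 3 ≠ x - 1 + 1) b)
        linarith
      have hgvv : 0 < g (v b - v (b-1)) := by rw [map_sub, hsb, ← ht]; linarith
      have hgww : g (v (b+1) - v (b-1)) = 0 := by rw [map_sub, hsb, ← hs]; ring
      have hpuu : f' (v (b+3) - v (b-1)) = 0 := by
        rw [map_sub, ← h34, hfe']
        ring
      have hpvv : f' (v b - v (b-1)) < 0 := by
        rw [map_sub, ← h34, hfe']
        have := hfs' b ((by decide : ∀ x : Fin 5, x ≠ x + 3) b)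
          ((by decide : ∀ x : Fin 5, x ≠ x + 3 + 1) b)
        linarith
      have hpww : f' (v (b+1) - v (b-1)) < 0 := by
        rw [map_sub, ← h34, hfe']
        have := hfs' (b+1) ((by decide : ∀ x : Fin 5, x + 1 ≠ x + 3) b)
          ((by decide : ∀ x : Fin 5, x + 1 ≠ x + 3 + 1) b)
        linarith
      have hgu := lemG_aux hD hfid hgid hpid hfvv hfww hfuu hgww hgvv hpuu hpvv hpww
      rw [map_sub, hsb] at hgu
      linarith
    have hvs : ∀ j, j ≠ b → g (v j) ≤ s := by
      intro j hj
      rcases (by decide : ∀ x y : Fin 5, y ≠ x →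
          y = x + 1 ∨ y = x + 2 ∨ y = x + 3 ∨ y = x + 4) b j hj with hh | hh | hh | hh
      · rw [hh, ← hs]
      · rw [hh]; exact hst2
      · rw [hh]; exact hst3
      · rw [hh, (by decide : ∀ x : Fin 5, x + 4 = x - 1) b, hsb]
    have hvt : ∀ j, g (v j) ≤ t := by
      intro j
      by_cases hj : j = b
      · rw [hj, ← ht]
      · exact (hvs j hj).trans hslt.le
    refine ⟨g, (s + t) / 2, ?_, ?_⟩
    · intro j hj
      rw [hT j]
      apply convexHull_min ?_ (convex_halfSpace_le (IsLinearMap.mk g.map_add g.map_smul) _)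
      intro x hx
      simp only [Set.mem_insert_iff, Set.mem_singleton_iff] at hx
      have hmidval : ∀ k : Fin 5, g (midpoint ℝ (v k) (v j)) ≤ (s + t) / 2 := by
        intro k
        have hadd : g (midpoint ℝ (v k) (v j)) + g (midpoint ℝ (v k) (v j))
            = g (v k) + g (v j) := clm_midpoint_aux g _ _
        have h6 := hvt k
        have h7 := hvs j hj
        show g (midpoint ℝ (v k) (v j)) ≤ (s + t) / 2
        linarith
      rcases hx with rfl | rfl | rfl
      · exact hmidval (j-1)
      · have h7 := hvs j hj
        show g (v j) ≤ (s + t) / 2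
        linarith
      · exact hmidval (j+1)
    · have hTb : ∀ z ∈ T b, (s + t) / 2 ≤ g z := by
        intro z hz
        rw [hT b] at hz
        have hsub : convexHull ℝ {midpoint ℝ (v (b-1)) (v b), v b, midpoint ℝ (v (b+1)) (v b)}
            ⊆ {x | (s + t) / 2 ≤ g x} := by
          apply convexHull_min ?_ (convex_halfSpace_ge (IsLinearMap.mk g.map_add g.map_smul) _)
          intro x hx
          simp only [Set.mem_insert_iff, Set.mem_singleton_iff] at hx
          rcases hx with rfl | rfl | rfl
          · have hadd : g (midpoint ℝ (v (b-1)) (v b)) + g (midpoint ℝ (v (b-1)) (v b))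
                = g (v (b-1)) + g (v b) := clm_midpoint_aux g _ _
            rw [hsb, ← ht] at hadd
            show (s + t) / 2 ≤ g (midpoint ℝ (v (b-1)) (v b))
            linarith
          · show (s + t) / 2 ≤ g (v b)
            rw [← ht]
            linarith
          · have hadd : g (midpoint ℝ (v (b+1)) (v b)) + g (midpoint ℝ (v (b+1)) (v b))
                = g (v (b+1)) + g (v b) := clm_midpoint_aux g _ _
            rw [← hs, ← ht] at hadd
            show (s + t) / 2 ≤ g (midpoint ℝ (v (b+1)) (v b))
            linarith
        exact hsub hz
      intro x hx
      have hy0 : 0 < g (v b - v (b+1)) := by rw [map_sub, ← ht, ← hs]; linarith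
      exact lemE_aux hTb hy0 hx
  -- conclusion
  by_contra hcon
  push_neg at hcon
  obtain ⟨u, husub, hucard⟩ := Set.exists_subset_card_eq (show 3 ≤ _ from hcon)
  rw [Set.ncard_eq_three] at hucard
  obtain ⟨a, b, c, hab, hac, hbc, rfl⟩ := hucard
  have ha : (L ∩ interior (T a)).Nonempty := husub (by simp)
  have hb : (L ∩ interior (T b)).Nonempty := husub (by simp)
  have hc : (L ∩ interior (T c)).Nonempty := husub (by simp)
  obtain ⟨xa, hxaL, hxa⟩ := ha
  obtain ⟨xb, hxbL, hxb⟩ := hb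
  obtain ⟨xc, hxcL, hxc⟩ := hc
  rw [hL] at hxaL hxbL hxcL
  obtain ⟨ta, rfl⟩ := hxaL
  obtain ⟨tb, rfl⟩ := hxbL
  obtain ⟨tc, rfl⟩ := hxcL
  have key : ∀ m i k : Fin 5, i ≠ m → k ≠ m → ∀ x1 x2 x3 : Fin 2 → ℝ,
      x2 ∈ interior (T m) → x1 ∈ interior (T i) → x3 ∈ interior (T k) →
      x2 ∈ segment ℝ x1 x3 → False := by
    intro m i k him hkm x1 x2 x3 h2 h1 h3 hseg
    obtain ⟨g, γ, hle, hgt⟩ := hsep m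
    have hc1 : x1 ∈ {x | g x ≤ γ} := hle i him (interior_subset h1)
    have hc3 : x3 ∈ {x | g x ≤ γ} := hle k hkm (interior_subset h3)
    have hcv : Convex ℝ {x | g x ≤ γ} :=
      convex_halfSpace_le (IsLinearMap.mk g.map_add g.map_smul) γ
    have hmem := hcv.segment_subset hc1 hc3 hseg
    exact absurd (hgt x2 h2) (not_lt.mpr hmem)
  rcases le_total ta tb with h1 | h1 <;> rcases le_total tb tc with h2 | h2 <;>
    rcases le_total ta tc with h3 | h3
  · exact key b a c hab (Ne.symm hbc) _ _ _ hxb hxa hxc (seg_param_aux h1 h2)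
  · exact key b a c hab (Ne.symm hbc) _ _ _ hxb hxa hxc (seg_param_aux h1 h2)
  · exact key c a b hac hbc _ _ _ hxc hxa hxb (seg_param_aux h3 h2)
  · exact key a c b (Ne.symm hac) (Ne.symm hab) _ _ _ hxa hxc hxb (seg_param_aux h3 h1)
  · exact key a b c (Ne.symm hab) (Ne.symm hac) _ _ _ hxa hxb hxc (seg_param_aux h1 h3)
  · exact key c b a hbc hac _ _ _ hxc hxb hxa (seg_param_aux h2 h3)
  · exact key b c a (Ne.symm hbc) hab _ _ _ hxb hxc hxa (seg_param_aux h2 h1)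
  · exact key b c a (Ne.symm hbc) hab _ _ _ hxb hxc hxa (seg_param_aux h2 h1)
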